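/- Let P, Q, R, S : ℂ → ℂ be arbitrary entire functions. Define the A-difference functions D_P(w) = P(iπ−w) + e^{iℓπ}·e^{2(1−ℓ)w}·P(w), D_Q(w) = Q(iπ−w) − e^{iℓπ}·e^{−2ℓw}·(μ·P(w) + e^{2w}·R(w)), D_R(w) = R(iπ−w) − e^{iℓπ}·e^{2(1−ℓ)w}·(μ·e^{2w}·P(w) + Q(w)), D_S(w) = S(iπ−w) + e^{iℓπ}·e^{−2ℓw}·(μ·(μ·e^{2w}·P(w) + Q(w)) + e^{2w}·(μ·e^{2w}·R(w) + S(w))), and set 𝔇(w) = e^{2(1−ℓ)w}·(P(w)·S(w) − Q(w)·R(w)). Then for every w ∈ ℂ the identity 𝔇(iπ−w) = 𝔇(w) + e^{−iℓπ}·( e^{−iℓπ}·e^{2(ℓ−1)w}·(S(iπ−w)·D_P(w) − R(iπ−w)·D_Q(w)) − (R(w) + μ·e^{−2w}·P(w))·D_R(w) − P(w)·D_S(w) ) holds. In particular, if the A-relations hold (so that D_P, D_Q, D_R, D_S vanish identically), then 𝔇(iπ−w) = 𝔇(w) for all w. -/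

import Mathlib

noncomputable def ipi : ℂ := (Real.pi : ℂ) * Complex.I

noncomputable def DP (ell mu : ℂ) (P Q R S : ℂ → ℂ) : ℂ → ℂ := fun w =>
  P (ipi - w) + Complex.exp (Complex.I * ell * (Real.pi : ℂ)) * Complex.exp (2 * (1 - ell) * w) * P w

noncomputable def DQ (ell mu : ℂ) (P Q R S : ℂ → ℂ) : ℂ → ℂ := fun w =>
  Q (ipi - w) - Complex.exp (Complex.I * ell * (Real.pi : ℂ)) * Complex.exp (-(2 * ell) * w) *
    (mu * P w + Complex.exp (2 * w) * R w)

noncomputable def DR (ell mu : ℂ) (P Q R S : ℂ → ℂ) : ℂ → ℂ := fun w =>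
  R (ipi - w) - Complex.exp (Complex.I * ell * (Real.pi : ℂ)) * Complex.exp (2 * (1 - ell) * w) *
    (mu * Complex.exp (2 * w) * P w + Q w)

noncomputable def DS (ell mu : ℂ) (P Q R S : ℂ → ℂ) : ℂ → ℂ := fun w =>
  S (ipi - w) + Complex.exp (Complex.I * ell * (Real.pi : ℂ)) * Complex.exp (-(2 * ell) * w) *
    (mu * (mu * Complex.exp (2 * w) * P w + Q w) +
      Complex.exp (2 * w) * (mu * Complex.exp (2 * w) * R w + S w))

noncomputable def dfrak (ell : ℂ) (P Q R S : ℂ → ℂ) : ℂ → ℂ := fun w =>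
  Complex.exp (2 * (1 - ell) * w) * (P w * S w - Q w * R w)

theorem statement_19 (ell lam mu : ℂ) (P Q R S : ℂ → ℂ)
    (hP : Differentiable ℂ P) (hQ : Differentiable ℂ Q)
    (hR : Differentiable ℂ R) (hS : Differentiable ℂ S) :
    (∀ w : ℂ,
      dfrak ell P Q R S (ipi - w) =
        dfrak ell P Q R S w +
          Complex.exp (-(Complex.I * ell * (Real.pi : ℂ))) *
            (Complex.exp (-(Complex.I * ell * (Real.pi : ℂ))) * Complex.exp (2 * (ell - 1) * w) *
              (S (ipi - w) * DP ell mu P Q R S w - R (ipi - w) * DQ ell mu P Q R S w) -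
              (R w + mu * Complex.exp (-(2 * w)) * P w) * DR ell mu P Q R S w -
              P w * DS ell mu P Q R S w)) ∧
    ((∀ w : ℂ, DP ell mu P Q R S w = 0 ∧ DQ ell mu P Q R S w = 0 ∧
        DR ell mu P Q R S w = 0 ∧ DS ell mu P Q R S w = 0) →
      ∀ w : ℂ, dfrak ell P Q R S (ipi - w) = dfrak ell P Q R S w) := by
  have key : ∀ w : ℂ,
      dfrak ell P Q R S (ipi - w) =
        dfrak ell P Q R S w +
          Complex.exp (-(Complex.I * ell * (Real.pi : ℂ))) *
            (Complex.exp (-(Complex.I * ell * (Real.pi : ℂ))) * Complex.exp (2 * (ell - 1) * w) *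
              (S (ipi - w) * DP ell mu P Q R S w - R (ipi - w) * DQ ell mu P Q R S w) -
              (R w + mu * Complex.exp (-(2 * w)) * P w) * DR ell mu P Q R S w -
              P w * DS ell mu P Q R S w) := by
    intro w
    simp only [dfrak, DP, DQ, DR, DS]
    have hE := Complex.exp_ne_zero (Complex.I * ell * (Real.pi : ℂ))
    have hX := Complex.exp_ne_zero (2 * w)
    have hY := Complex.exp_ne_zero (2 * ell * w)
    have e1 : Complex.exp (2 * (1 - ell) * w)
        = Complex.exp (2 * w) * (Complex.exp (2 * ell * w))⁻¹ := by
      rw [← Complex.exp_neg, ← Complex.exp_add]; congr 1; ring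
    have e2 : Complex.exp (-(2 * ell) * w) = (Complex.exp (2 * ell * w))⁻¹ := by
      rw [← Complex.exp_neg]; congr 1; ring
    have e3 : Complex.exp (2 * (ell - 1) * w)
        = Complex.exp (2 * ell * w) * (Complex.exp (2 * w))⁻¹ := by
      rw [← Complex.exp_neg, ← Complex.exp_add]; congr 1; ring
    have e4 : Complex.exp (-(2 * w)) = (Complex.exp (2 * w))⁻¹ := Complex.exp_neg _
    have e5 : Complex.exp (-(Complex.I * ell * (Real.pi : ℂ)))
        = (Complex.exp (Complex.I * ell * (Real.pi : ℂ)))⁻¹ := Complex.exp_neg _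
    have e6 : Complex.exp (2 * (1 - ell) * (ipi - w))
        = (Complex.exp (Complex.I * ell * (Real.pi : ℂ)))⁻¹
          * (Complex.exp (Complex.I * ell * (Real.pi : ℂ)))⁻¹
          * (Complex.exp (2 * ell * w) * (Complex.exp (2 * w))⁻¹) := by
      have h2 : 2 * (1 - ell) * (ipi - w)
          = 2 * (Real.pi : ℂ) * Complex.I +
            (-(Complex.I * ell * (Real.pi : ℂ)) +
              (-(Complex.I * ell * (Real.pi : ℂ)) + (2 * ell * w + -(2 * w)))) := by
        simp only [ipi]; ring
      rw [h2]
      simp only [Complex.exp_add, Complex.exp_neg, Complex.exp_two_pi_mul_I, one_mul]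
      ring
    rw [e1, e2, e3, e4, e5, e6]
    generalize Complex.exp (Complex.I * ell * (Real.pi : ℂ)) = A at hE ⊢
    generalize Complex.exp (2 * w) = X at hX ⊢
    generalize Complex.exp (2 * ell * w) = Y at hY ⊢
    field_simp
    have hD : A * (A * X * Y * (X * Y) * Y) ≠ 0 :=
      mul_ne_zero hE (mul_ne_zero (mul_ne_zero (mul_ne_zero (mul_ne_zero hE hX) hY)
        (mul_ne_zero hX hY)) hY)
    ring
  refine ⟨key, fun h w => ?_⟩
  rw [key w]
  simp [(h w).1, (h w).2.1, (h w).2.2.1, (h w).2.2.2]
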